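/- With t := ε(1) and δ := ω·(α - σ(α)), one has algebraMap K R (t) · δ · σ(ω) = σ(ω) - ω; equivalently, since σ(ω) is a unit of R, algebraMap K R (t) · δ = 1 - ω·σ(ω)⁻¹. -/

import Mathlib

open Polynomial TensorProduct

noncomputable section

variable {K : Type*} [CommRing K]

/-- The quadratic `K`-algebra `K[X]/(X² - s·X + p)`. -/
abbrev Quad (s p : K) : Type _ := AdjoinRoot (X ^ 2 - C s * X + C p)

/-- The image of `X`, i.e. the generator `α`. -/
def qα (s p : K) : Quad s p := AdjoinRoot.root _

lemma quad_aeval_root (s p : K) :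
    (aeval (qα s p)) (X ^ 2 - C s * X + C p) = 0 := by
  simp [qα, AdjoinRoot.aeval_eq, AdjoinRoot.mk_self]

/-- The involution `σ` of the quadratic algebra, with `σ α = s - α`. -/
def qσ (s p : K) : Quad s p →ₐ[K] Quad s p :=
  AdjoinRoot.liftAlgHom _ (Algebra.ofId K (Quad s p)) (algebraMap K (Quad s p) s - qα s p) (by
    have h' : (aeval (algebraMap K (Quad s p) s - qα s p)) (X ^ 2 - C s * X + C p) = 0 := by
      have h := quad_aeval_root s p
      simp only [map_add, map_sub, map_mul, map_pow, aeval_X, aeval_C] at h ⊢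
      linear_combination h
    exact h')

lemma quad_monic (s p : K) : (X ^ 2 - C s * X + C p).Monic := by monicity!

lemma quad_repr (s p : K) (x : Quad s p) : ∃ a b : K,
    x = algebraMap K _ a + algebraMap K _ b * qα s p := by
  cases subsingleton_or_nontrivial K
  · have : Subsingleton (Quad s p) := Module.subsingleton K _
    exact ⟨0, 0, Subsingleton.elim _ _⟩
  obtain ⟨g, rfl⟩ := AdjoinRoot.mk_surjective x
  refine ⟨(g %ₘ (X ^ 2 - C s * X + C p)).coeff 0, (g %ₘ (X ^ 2 - C s * X + C p)).coeff 1, ?_⟩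
  have hm := quad_monic s p
  have hdeg : (g %ₘ (X ^ 2 - C s * X + C p)).degree ≤ 1 := by
    have h1 := degree_modByMonic_lt g hm
    have h2 : (X ^ 2 - C s * X + C p : K[X]).degree = 2 := by compute_degree!
    rw [h2] at h1
    exact Order.le_of_lt_succ (by exact_mod_cast h1)
  have hr := Polynomial.eq_X_add_C_of_degree_le_one hdeg
  have heq : AdjoinRoot.mk (X ^ 2 - C s * X + C p) g
      = AdjoinRoot.mk (X ^ 2 - C s * X + C p) (g %ₘ (X ^ 2 - C s * X + C p)) := by
    rw [AdjoinRoot.mk_eq_mk]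
    exact ⟨g /ₘ _, by rw [modByMonic_eq_sub_mul_div g (X ^ 2 - C s * X + C p)]; ring⟩
  rw [heq, hr]
  simp [map_add, map_mul, AdjoinRoot.mk_C, AdjoinRoot.mk_X, qα, ← AdjoinRoot.algebraMap_eq]
  ring

lemma qσ_root (s p : K) : qσ s p (qα s p) = algebraMap K (Quad s p) s - qα s p := by
  simp [qσ, qα, AdjoinRoot.liftAlgHom_root]

lemma quad_rel (s p : K) :
    (qα s p) ^ 2 - algebraMap K (Quad s p) s * qα s p + algebraMap K (Quad s p) p = 0 := by
  simpa using quad_aeval_root s p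

lemma quad_key (s p : K) (ω : (Quad s p)ˣ) (ε : Quad s p →ₗ[K] K)
    (hω : ε (ω : Quad s p) = 0) (hωα : ε ((ω : Quad s p) * qα s p) = 1) :
    algebraMap K (Quad s p) (ε 1) *
        ((ω : Quad s p) * (qα s p - qσ s p (qα s p))) * qσ s p (ω : Quad s p)
      = qσ s p (ω : Quad s p) - (ω : Quad s p) := by
  obtain ⟨a, b, hab⟩ := quad_repr s p (ω : Quad s p)
  set α := qα s p with hα
  set f := algebraMap K (Quad s p) with hf
  have hrel : α ^ 2 - f s * α + f p = 0 := quad_rel s p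
  have hσω : qσ s p (ω : Quad s p) = f a + f b * (f s - α) := by
    rw [hab]
    simp [map_add, map_mul, ← AdjoinRoot.algebraMap_eq, AlgHom.commutes, qσ_root, hf, hα]
  have hε : ∀ (c : K) (x : Quad s p), ε (f c * x) = c * ε x := by
    intro c x
    rw [hf, ← Algebra.smul_def, map_smul, smul_eq_mul]
  have hε1 : ∀ c : K, ε (f c) = c * ε 1 := fun c => by rw [← mul_one (f c), hε]
  have h1 : a * ε 1 + b * ε α = 0 := by
    rw [← hω, hab, map_add, hε1, hε]
  have h2 : -(b * p) * ε 1 + (a + b * s) * ε α = 1 := by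
    rw [← hωα, hab]
    have : (f a + f b * α) * α = f (-(b * p)) * 1 + f (a + b * s) * α := by
      push_cast [map_add, map_mul, map_neg]
      linear_combination f b * hrel
    rw [this, map_add, hε, hε]
  have hN : ε 1 * (a * a + a * b * s + b * b * p) = -b := by
    linear_combination (a + b * s) * h1 - b * h2
  have hNR : f (ε 1) * (f a * f a + f a * f b * f s + f b * f b * f p) = - f b := by
    rw [← map_mul, ← map_mul, ← map_mul, ← map_mul, ← map_mul, ← map_add, ← map_add,
      ← map_mul, ← map_neg, hN]
  rw [hσω, hab, qσ_root]
  rw [hf] at hNR ⊢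
  linear_combination (2 * α - algebraMap K (Quad s p) s) * hNR -
    algebraMap K (Quad s p) (ε 1) * (2 * α - algebraMap K (Quad s p) s) *
      (algebraMap K (Quad s p) b) ^ 2 * hrel

/-- With `t = ε 1` and `δ = ω·(α - σ α)`, one has `t·δ·σ(ω) = σ(ω) - ω`;
equivalently, since `σ(ω)` is a unit, `t·δ = 1 - ω·σ(ω)⁻¹`. -/
theorem stmt4 (s p : K) (ω : (Quad s p)ˣ) (ε : Quad s p →ₗ[K] K)
    (hω : ε (ω : Quad s p) = 0) (hωα : ε ((ω : Quad s p) * qα s p) = 1) :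
    algebraMap K (Quad s p) (ε 1) *
        ((ω : Quad s p) * (qα s p - qσ s p (qα s p))) * qσ s p (ω : Quad s p)
      = qσ s p (ω : Quad s p) - (ω : Quad s p) ∧
    IsUnit (qσ s p (ω : Quad s p)) ∧
    algebraMap K (Quad s p) (ε 1) * ((ω : Quad s p) * (qα s p - qσ s p (qα s p)))
      = 1 - (ω : Quad s p) * Ring.inverse (qσ s p (ω : Quad s p)) := by
  have key := quad_key s p ω ε hω hωα
  have hu : IsUnit (qσ s p (ω : Quad s p)) := ω.isUnit.map (qσ s p)
  refine ⟨key, hu, ?_⟩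
  obtain ⟨u, hu'⟩ := hu
  rw [← hu'] at key ⊢
  rw [Ring.inverse_unit]
  have huu : (u : Quad s p) * ↑u⁻¹ = 1 := u.mul_inv
  linear_combination (↑u⁻¹ : Quad s p) * key +
    (1 - algebraMap K (Quad s p) (ε 1) *
      ((ω : Quad s p) * (qα s p - qσ s p (qα s p)))) * huu

end
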